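/- Let k be a field of characteristic 2 and R = k[a,b,c,d]/(ad - bc - 1). The k-subalgebra B of R generated by ab and cd is a polynomial ring in two variables: the k-algebra homomorphism k[X,Y] → R sending X ↦ ab, Y ↦ cd is injective. -/

import Mathlib

open MvPolynomial

noncomputable section

/-- The polynomial ring `k[a,b,c,d]` (variables indexed by `Fin 4`). -/
abbrev P (k : Type*) [Field k] := MvPolynomial (Fin 4) k

/-- The ideal `(ad - bc - 1)`. -/
def sl2Rel (k : Type*) [Field k] : Ideal (P k) :=
  Ideal.span {X 0 * X 3 - X 1 * X 2 - 1}

/-- `R = k[a,b,c,d]/(ad - bc - 1)`, the coordinate ring of `SL₂`. -/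
abbrev R (k : Type*) [Field k] := P k ⧸ sl2Rel k

def va (k : Type*) [Field k] : R k := Ideal.Quotient.mk _ (X 0)
def vb (k : Type*) [Field k] : R k := Ideal.Quotient.mk _ (X 1)
def vc (k : Type*) [Field k] : R k := Ideal.Quotient.mk _ (X 2)
def vd (k : Type*) [Field k] : R k := Ideal.Quotient.mk _ (X 3)

namespace Stmt5Aux

variable (k : Type*) [Field k]

/-- The target ring `k[x][y]`. -/
abbrev A := Polynomial (Polynomial k)

/-- `x` viewed inside `k[x][y]`. -/
def xx : A k := Polynomial.C Polynomial.X

/-- `y + x y²` inside `k[x][y]`. -/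
def ww : A k := Polynomial.X + xx k * Polynomial.X ^ 2

lemma natDegree_ww : (ww k).natDegree = 2 := by
  unfold ww xx
  compute_degree!

lemma transcendental_ww : Transcendental (Polynomial k) (ww k) := by
  apply Polynomial.transcendental
  · rw [natDegree_ww]; norm_num
  · apply mem_nonZeroDivisors_of_ne_zero
    rw [Polynomial.leadingCoeff, natDegree_ww]
    unfold ww xx
    simp [Polynomial.coeff_X, Polynomial.X_ne_zero]

lemma transcendental_xx : Transcendental k (xx k) := by
  have h : Function.Injective (algebraMap (Polynomial k) (A k)) := by
    rw [Polynomial.algebraMap_eq]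
    exact Polynomial.C_injective
  have := (transcendental_algebraMap_iff (R := k) (A := A k) h).2
    (Polynomial.transcendental_X k)
  rwa [Polynomial.algebraMap_eq] at this

lemma aeval_xx_eq : (Polynomial.aeval (xx k) : Polynomial k →ₐ[k] A k)
    = IsScalarTower.toAlgHom k (Polynomial k) (A k) := by
  apply Polynomial.algHom_ext
  simp [xx, Polynomial.algebraMap_eq]

lemma transcendental_ww_adjoin :
    Transcendental (Algebra.adjoin k {xx k}) (ww k) := by
  have hinj : Function.Injective (Polynomial.aeval (xx k) : Polynomial k →ₐ[k] A k) :=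
    transcendental_iff_injective.mp (transcendental_xx k)
  let f : Polynomial k ≃ₐ[k] Algebra.adjoin k {xx k} :=
    (AlgEquiv.ofInjective _ hinj).trans
      (Subalgebra.equivOfEq _ _ (Algebra.adjoin_singleton_eq_range_aeval k (xx k)).symm)
  have h : (algebraMap (Algebra.adjoin k {xx k}) (A k)).comp (f : Polynomial k →+* _)
      = (RingHom.id (A k)).comp (algebraMap (Polynomial k) (A k)) := by
    refine RingHom.ext fun s => ?_
    show ((f s : Algebra.adjoin k {xx k}) : A k) = _
    have := congrArg (fun (g : Polynomial k →ₐ[k] A k) => g s) (aeval_xx_eq k)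
    simpa [f] using this
  exact (transcendental_ringHom_iff_of_comp_eq f (RingHom.id (A k))
    Function.injective_id h).mpr (transcendental_ww k)

/-- The pair `(x, y + x y²)`. -/
def vA : Fin 2 → A k := fun i => if i = 0 then xx k else ww k

lemma algIndep_vA : AlgebraicIndependent k (vA k) := by
  have hx1 : AlgebraicIndependent k (fun _ : Unit => xx k) :=
    algebraicIndependent_unique_type_iff.mpr (transcendental_xx k)
  have hopt : AlgebraicIndependent k
      (fun o : Option Unit => o.elim (ww k) (fun _ => xx k)) := by
    rw [hx1.option_iff_transcendental (ww k), Set.range_const]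
    exact transcendental_ww_adjoin k
  have hinj : Function.Injective
      (fun i : Fin 2 => if i = 0 then (some () : Option Unit) else none) := by
    intro i j hij
    fin_cases i <;> fin_cases j <;> simp_all
  have := hopt.comp _ hinj
  convert this using 1
  funext i
  fin_cases i <;> simp [vA]

/-- The specialization `a ↦ 1, b ↦ x, c ↦ y, d ↦ 1 + x y`. -/
def g4 : Fin 4 → A k := ![1, xx k, Polynomial.X, 1 + xx k * Polynomial.X]

lemma vanish : ∀ p ∈ sl2Rel k, MvPolynomial.aeval (g4 k) p = 0 := by
  intro p hp
  rw [sl2Rel, Ideal.mem_span_singleton] at hp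
  obtain ⟨q, rfl⟩ := hp
  rw [map_mul]
  have : MvPolynomial.aeval (g4 k) (X 0 * X 3 - X 1 * X 2 - 1 : P k) = 0 := by
    simp [g4]
  rw [this, zero_mul]

/-- The induced map `R → k[x][y]`. -/
def φ : R k →ₐ[k] A k := Ideal.Quotient.liftₐ (sl2Rel k) (MvPolynomial.aeval (g4 k)) (vanish k)

lemma φ_ab : φ k (va k * vb k) = xx k := by
  rw [va, vb, map_mul]
  simp only [φ, Ideal.Quotient.liftₐ_apply, Ideal.Quotient.lift_mk, AlgHom.coe_toRingHom,
    aeval_X]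
  simp [φ, g4]

lemma φ_cd : φ k (vc k * vd k) = ww k := by
  rw [vc, vd, map_mul]
  simp only [φ, Ideal.Quotient.liftₐ_apply, Ideal.Quotient.lift_mk, AlgHom.coe_toRingHom,
    aeval_X]
  simp [g4, ww]
  ring

end Stmt5Aux

/-- The `k`-algebra map `k[X,Y] → R`, `X ↦ ab`, `Y ↦ cd`, is injective,
so `B = k[ab, cd]` is a polynomial ring in two variables. -/
theorem stmt5 (k : Type*) [Field k] [CharP k 2] :
    Function.Injective
      (MvPolynomial.aeval (fun i : Fin 2 => if i = 0 then va k * vb k else vc k * vd k) :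
        MvPolynomial (Fin 2) k →ₐ[k] R k) := by
  have hcomp : (Stmt5Aux.φ k).comp
      (MvPolynomial.aeval (fun i : Fin 2 => if i = 0 then va k * vb k else vc k * vd k))
      = MvPolynomial.aeval (Stmt5Aux.vA k) := by
    apply MvPolynomial.algHom_ext
    intro i
    fin_cases i <;>
      simp [Stmt5Aux.vA, Stmt5Aux.φ_ab, Stmt5Aux.φ_cd]
  have hAI : Function.Injective (MvPolynomial.aeval (Stmt5Aux.vA k) :
      MvPolynomial (Fin 2) k →ₐ[k] Stmt5Aux.A k) := Stmt5Aux.algIndep_vA k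
  rw [← hcomp, AlgHom.coe_comp] at hAI
  exact Function.Injective.of_comp hAI
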